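/- Let Λ be a finite set of unit vectors in ℝ³ with Λ = −Λ. For each ξ ∈ Λ let A_ξ ∈ ℝ³ be a unit vector with A_ξ·ξ = 0 and A_{−ξ} = A_ξ, and let B_ξ := (A_ξ + i ξ×A_ξ)/√2 be the associated Beltrami vectors. Let λ ∈ ℝ and let (a_ξ)_{ξ∈Λ} be complex coefficients with a_{−ξ} = conj(a_ξ) for all ξ ∈ Λ. Define W : ℝ³ → ℂ³ by W(x) := Σ_{ξ∈Λ} a_ξ B_ξ e^{iλ ξ·x}. Then W is ℝ³-valued (each component of W(x) has zero imaginary part for every x), div W(x) = 0, and curl W(x) = λ W(x) for every x ∈ ℝ³. -/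

import Mathlib

/-- The Beltrami vector `B = (A + i ξ×A)/√2 ∈ ℂ³` associated with unit vectors
`ξ, A ∈ ℝ³` with `A·ξ = 0`. The cross product is extended ℂ-bilinearly to `ℂ³`. -/
noncomputable def beltrami (ξ A : Fin 3 → ℝ) : Fin 3 → ℂ :=
  fun k =>
    ((A k : ℂ) + Complex.I * crossProduct (fun j => (ξ j : ℂ)) (fun j => (A j : ℂ)) k) /
      (Real.sqrt 2 : ℂ)

/-- The partial derivative `∂_j f` of a complex-valued function on `ℝ³`. -/
noncomputable def pdC (j : Fin 3) (f : (Fin 3 → ℝ) → ℂ) (x : Fin 3 → ℝ) : ℂ :=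
  fderiv ℝ f x (Pi.single j 1)

/-- The divergence `div F = ∂₁F₁ + ∂₂F₂ + ∂₃F₃` of a map `F : ℝ³ → ℂ³`. -/
noncomputable def divC (F : (Fin 3 → ℝ) → Fin 3 → ℂ) (x : Fin 3 → ℝ) : ℂ :=
  ∑ j, pdC j (fun y => F y j) x

/-- The curl `curl F = (∂₂F₃ − ∂₃F₂, ∂₃F₁ − ∂₁F₃, ∂₁F₂ − ∂₂F₁)` of a map `F : ℝ³ → ℂ³`. -/
noncomputable def curlC (F : (Fin 3 → ℝ) → Fin 3 → ℂ) (x : Fin 3 → ℝ) : Fin 3 → ℂ :=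
  ![pdC 1 (fun y => F y 2) x - pdC 2 (fun y => F y 1) x,
    pdC 2 (fun y => F y 0) x - pdC 0 (fun y => F y 2) x,
    pdC 0 (fun y => F y 1) x - pdC 1 (fun y => F y 0) x]

/-- Auxiliary continuous linear map `y ↦ iλ Σ_j ξ_j y_j`. -/
noncomputable def Lcm (lam : ℝ) (ξ : Fin 3 → ℝ) : (Fin 3 → ℝ) →L[ℝ] ℂ :=
  (Complex.I * lam) • ∑ j : Fin 3, (ξ j : ℂ) • (Complex.ofRealCLM.comp (ContinuousLinearMap.proj j))

lemma Lcm_apply (lam : ℝ) (ξ : Fin 3 → ℝ) (y : Fin 3 → ℝ) :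
    Lcm lam ξ y = Complex.I * lam * ∑ j, (ξ j : ℂ) * (y j : ℂ) := by
  simp [Lcm, Finset.mul_sum, mul_comm]

lemma Lcm_single (lam : ℝ) (ξ : Fin 3 → ℝ) (j : Fin 3) :
    Lcm lam ξ (Pi.single j 1) = Complex.I * lam * (ξ j : ℂ) := by
  rw [Lcm_apply]
  congr 1
  rw [Fin.sum_univ_three]
  fin_cases j <;> simp

lemma hasFDerivAt_term (c : ℂ) (lam : ℝ) (ξ : Fin 3 → ℝ) (x : Fin 3 → ℝ) :
    HasFDerivAt
      (fun y : Fin 3 → ℝ => c * Complex.exp (Complex.I * lam * ∑ m, (ξ m : ℂ) * (y m : ℂ)))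
      ((c * Complex.exp (Complex.I * lam * ∑ m, (ξ m : ℂ) * (x m : ℂ))) • Lcm lam ξ) x := by
  have h1 : HasFDerivAt (fun y => Lcm lam ξ y) (Lcm lam ξ) x := (Lcm lam ξ).hasFDerivAt
  have h2 := (Complex.hasDerivAt_exp (Lcm lam ξ x)).comp_hasFDerivAt x h1
  have h3 := h2.const_mul c
  have : (fun y => c * (Complex.exp ∘ fun y => (Lcm lam ξ) y) y)
      = fun y : Fin 3 → ℝ => c * Complex.exp (Complex.I * lam * ∑ m, (ξ m : ℂ) * (y m : ℂ)) := by
    funext y; simp [Lcm_apply]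
  rw [this] at h3
  rw [Lcm_apply] at h3
  rwa [smul_smul] at h3

lemma belt_div (ξ A : Fin 3 → ℝ) (hA : ∑ k, A k * ξ k = 0) :
    ∑ k, (ξ k : ℂ) * beltrami ξ A k = 0 := by
  have hA' : ((A 0 : ℂ) * ξ 0 + A 1 * ξ 1 + A 2 * ξ 2) = 0 := by
    have := congrArg (Complex.ofReal) hA
    push_cast [Fin.sum_univ_three] at this
    linear_combination this
  simp only [beltrami, cross_apply, Fin.sum_univ_three, Matrix.cons_val_zero,
    Matrix.cons_val_one, Matrix.head_cons, Matrix.cons_val_two, Matrix.tail_cons]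
  linear_combination hA' / (Real.sqrt 2 : ℂ)

lemma belt_cross (ξ A : Fin 3 → ℝ) (hξ : ∑ k, ξ k ^ 2 = 1) (hA : ∑ k, A k * ξ k = 0) :
    Complex.I * ((ξ 1 : ℂ) * beltrami ξ A 2 - (ξ 2 : ℂ) * beltrami ξ A 1) = beltrami ξ A 0 ∧
    Complex.I * ((ξ 2 : ℂ) * beltrami ξ A 0 - (ξ 0 : ℂ) * beltrami ξ A 2) = beltrami ξ A 1 ∧
    Complex.I * ((ξ 0 : ℂ) * beltrami ξ A 1 - (ξ 1 : ℂ) * beltrami ξ A 0) = beltrami ξ A 2 := by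
  have hA' : ((A 0 : ℂ) * ξ 0 + A 1 * ξ 1 + A 2 * ξ 2) = 0 := by
    have := congrArg (Complex.ofReal) hA
    push_cast [Fin.sum_univ_three] at this
    linear_combination this
  have hξ' : ((ξ 0 : ℂ) ^ 2 + ξ 1 ^ 2 + ξ 2 ^ 2) = 1 := by
    have := congrArg (Complex.ofReal) hξ
    push_cast [Fin.sum_univ_three] at this
    linear_combination this
  refine ⟨?_, ?_, ?_⟩ <;>
    simp only [beltrami, cross_apply, Matrix.cons_val_zero, Matrix.cons_val_one,
      Matrix.head_cons, Matrix.cons_val_two, Matrix.tail_cons]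
  · linear_combination (-(ξ 0 : ℂ) / (Real.sqrt 2 : ℂ)) * hA' + ((A 0 : ℂ) / (Real.sqrt 2 : ℂ)) * hξ' +
      (((ξ 1 : ℂ) * ξ 0 * A 1 - (ξ 1 : ℂ) ^ 2 * A 0 + (A 2 : ℂ) * ξ 0 * ξ 2 - (A 0 : ℂ) * ξ 2 ^ 2) /
        (Real.sqrt 2 : ℂ)) * Complex.I_sq
  · linear_combination (-(ξ 1 : ℂ) / (Real.sqrt 2 : ℂ)) * hA' + ((A 1 : ℂ) / (Real.sqrt 2 : ℂ)) * hξ' +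
      (((ξ 2 : ℂ) * ξ 1 * A 2 - (ξ 2 : ℂ) ^ 2 * A 1 + (A 0 : ℂ) * ξ 1 * ξ 0 - (A 1 : ℂ) * ξ 0 ^ 2) /
        (Real.sqrt 2 : ℂ)) * Complex.I_sq
  · linear_combination (-(ξ 2 : ℂ) / (Real.sqrt 2 : ℂ)) * hA' + ((A 2 : ℂ) / (Real.sqrt 2 : ℂ)) * hξ' +
      (((ξ 0 : ℂ) * ξ 2 * A 0 - (ξ 0 : ℂ) ^ 2 * A 2 + (A 1 : ℂ) * ξ 2 * ξ 1 - (A 2 : ℂ) * ξ 1 ^ 2) /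
        (Real.sqrt 2 : ℂ)) * Complex.I_sq

lemma belt_conj (ξ A : Fin 3 → ℝ) (k : Fin 3) :
    starRingEnd ℂ (beltrami ξ A k) = beltrami (-ξ) A k := by
  fin_cases k <;>
    simp [beltrami, cross_apply, map_div₀, Complex.conj_I, Complex.conj_ofReal] <;>
    push_cast <;> ring

/-- A linear combination `W(x) = Σ_{ξ∈Λ} a_ξ B_ξ e^{iλ ξ·x}` of Beltrami waves with
`a_{-ξ} = conj(a_ξ)` is `ℝ³`-valued, divergence-free and satisfies `curl W = λ W`. -/
theorem stmt_4 (Λ : Finset (Fin 3 → ℝ))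
    (hΛunit : ∀ ξ ∈ Λ, ∑ k, ξ k ^ 2 = 1) (hΛsym : ∀ ξ ∈ Λ, -ξ ∈ Λ)
    (A : (Fin 3 → ℝ) → Fin 3 → ℝ)
    (hAunit : ∀ ξ ∈ Λ, ∑ k, A ξ k ^ 2 = 1)
    (hAperp : ∀ ξ ∈ Λ, ∑ k, A ξ k * ξ k = 0)
    (hAeven : ∀ ξ ∈ Λ, A (-ξ) = A ξ)
    (a : (Fin 3 → ℝ) → ℂ) (ha : ∀ ξ ∈ Λ, a (-ξ) = starRingEnd ℂ (a ξ))
    (lam : ℝ)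
    (W : (Fin 3 → ℝ) → Fin 3 → ℂ)
    (hW : ∀ x k, W x k = ∑ ξ ∈ Λ,
      a ξ * beltrami ξ (A ξ) k * Complex.exp (Complex.I * (lam : ℂ) * ∑ j, (ξ j : ℂ) * (x j : ℂ))) :
    (∀ x k, (W x k).im = 0) ∧
    (∀ x, divC W x = 0) ∧
    (∀ x k, curlC W x k = (lam : ℂ) * W x k) := by
  -- the key derivative computation
  have key : ∀ (x : Fin 3 → ℝ) (j k : Fin 3),
      pdC j (fun y => W y k) x = ∑ ξ ∈ Λ, (Complex.I * lam * (ξ j : ℂ)) *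
        (a ξ * beltrami ξ (A ξ) k *
          Complex.exp (Complex.I * (lam : ℂ) * ∑ m, (ξ m : ℂ) * (x m : ℂ))) := by
    intro x j k
    have hfun : (fun y => W y k) = fun y => ∑ ξ ∈ Λ, a ξ * beltrami ξ (A ξ) k *
        Complex.exp (Complex.I * (lam : ℂ) * ∑ m, (ξ m : ℂ) * (y m : ℂ)) :=
      funext fun y => hW y k
    have hd : HasFDerivAt
        (fun y : Fin 3 → ℝ => ∑ ξ ∈ Λ, a ξ * beltrami ξ (A ξ) k *
          Complex.exp (Complex.I * (lam : ℂ) * ∑ m, (ξ m : ℂ) * (y m : ℂ)))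
        (∑ ξ ∈ Λ, ((a ξ * beltrami ξ (A ξ) k) *
          Complex.exp (Complex.I * lam * ∑ m, (ξ m : ℂ) * (x m : ℂ))) • Lcm lam ξ) x :=
      HasFDerivAt.fun_sum fun ξ _ => hasFDerivAt_term (a ξ * beltrami ξ (A ξ) k) lam ξ x
    rw [pdC, hfun, hd.fderiv]
    rw [ContinuousLinearMap.sum_apply]
    refine Finset.sum_congr rfl fun ξ _ => ?_
    rw [ContinuousLinearMap.smul_apply, Lcm_single, smul_eq_mul]
    ring
  refine ⟨?_, ?_, ?_⟩
  · -- real-valuedness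
    intro x k
    rw [← Complex.conj_eq_iff_im, hW x k, map_sum]
    refine Finset.sum_nbij' (fun ξ => -ξ) (fun ξ => -ξ) (fun ξ h => hΛsym ξ h)
      (fun ξ h => hΛsym ξ h) (fun ξ _ => neg_neg ξ) (fun ξ _ => neg_neg ξ) ?_
    intro ξ hmem
    have hexp : starRingEnd ℂ
        (Complex.exp (Complex.I * (lam : ℂ) * ∑ j, (ξ j : ℂ) * (x j : ℂ)))
        = Complex.exp (Complex.I * (lam : ℂ) * ∑ j, (((-ξ) j : ℂ)) * (x j : ℂ)) := by
      rw [← Complex.exp_conj]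
      congr 1
      simp only [Fin.sum_univ_three, Pi.neg_apply, Complex.ofReal_neg]
      simp [Complex.conj_I, Complex.conj_ofReal]
      ring
    rw [map_mul, map_mul, ← ha ξ hmem, belt_conj, hexp, hAeven ξ hmem]
  · -- divergence-free
    intro x
    rw [divC]
    calc (∑ j, pdC j (fun y => W y j) x)
        = ∑ j, ∑ ξ ∈ Λ, (Complex.I * lam * (ξ j : ℂ)) *
            (a ξ * beltrami ξ (A ξ) j *
              Complex.exp (Complex.I * (lam : ℂ) * ∑ m, (ξ m : ℂ) * (x m : ℂ))) :=
          Finset.sum_congr rfl fun j _ => key x j j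
      _ = ∑ ξ ∈ Λ, ∑ j, (Complex.I * lam * (ξ j : ℂ)) *
            (a ξ * beltrami ξ (A ξ) j *
              Complex.exp (Complex.I * (lam : ℂ) * ∑ m, (ξ m : ℂ) * (x m : ℂ))) :=
          Finset.sum_comm
      _ = 0 := by
          refine Finset.sum_eq_zero fun ξ hmem => ?_
          have h0 := belt_div ξ (A ξ) (hAperp ξ hmem)
          rw [Fin.sum_univ_three] at h0 ⊢
          linear_combination (Complex.I * lam * a ξ *
            Complex.exp (Complex.I * (lam : ℂ) * ∑ m, (ξ m : ℂ) * (x m : ℂ))) * h0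
  · -- curl W = λ W
    intro x k
    fin_cases k
    · show pdC 1 (fun y => W y 2) x - pdC 2 (fun y => W y 1) x = (lam : ℂ) * W x 0
      rw [key x 1 2, key x 2 1, hW x 0, ← Finset.sum_sub_distrib, Finset.mul_sum]
      refine Finset.sum_congr rfl fun ξ hmem => ?_
      obtain ⟨h1, -, -⟩ := belt_cross ξ (A ξ) (hΛunit ξ hmem) (hAperp ξ hmem)
      linear_combination ((lam : ℂ) * a ξ *
        Complex.exp (Complex.I * (lam : ℂ) * ∑ m, (ξ m : ℂ) * (x m : ℂ))) * h1
    · show pdC 2 (fun y => W y 0) x - pdC 0 (fun y => W y 2) x = (lam : ℂ) * W x 1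
      rw [key x 2 0, key x 0 2, hW x 1, ← Finset.sum_sub_distrib, Finset.mul_sum]
      refine Finset.sum_congr rfl fun ξ hmem => ?_
      obtain ⟨-, h2, -⟩ := belt_cross ξ (A ξ) (hΛunit ξ hmem) (hAperp ξ hmem)
      linear_combination ((lam : ℂ) * a ξ *
        Complex.exp (Complex.I * (lam : ℂ) * ∑ m, (ξ m : ℂ) * (x m : ℂ))) * h2
    · show pdC 0 (fun y => W y 1) x - pdC 1 (fun y => W y 0) x = (lam : ℂ) * W x 2
      rw [key x 0 1, key x 1 0, hW x 2, ← Finset.sum_sub_distrib, Finset.mul_sum]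
      refine Finset.sum_congr rfl fun ξ hmem => ?_
      obtain ⟨-, -, h3⟩ := belt_cross ξ (A ξ) (hΛunit ξ hmem) (hAperp ξ hmem)
      linear_combination ((lam : ℂ) * a ξ *
        Complex.exp (Complex.I * (lam : ℂ) * ∑ m, (ξ m : ℂ) * (x m : ℂ))) * h3
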